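/- Let B be a k×k complex matrix, λ ∈ ℂ with λ ≠ 0, c ≥ 1 an integer, i ≥ 1, and let v ∈ ℂ^k be a generalised eigenvector of order i for λ, i.e. (B − λI)^i v = 0 and (B − λI)^{i−1} v ≠ 0. Then v is a generalised eigenvector of order i of B^c for the eigenvalue λ^c, i.e. (B^c − λ^c I)^i v = 0 and (B^c − λ^c I)^{i−1} v ≠ 0. -/
import Mathlib

open Polynomial

/-- Let `B` be a `k × k` complex matrix, `λ ≠ 0`, `c ≥ 1`, `i ≥ 1`, and let `v` be a
generalised eigenvector of order `i` for `λ` (i.e. `(B - λI)^i v = 0` and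
`(B - λI)^(i-1) v ≠ 0`). Then `v` is a generalised eigenvector of order `i` of `B^c`
for the eigenvalue `λ^c`. -/
theorem stmt8 {k : ℕ} (B : Matrix (Fin k) (Fin k) ℂ) (lam : ℂ) (hlam : lam ≠ 0)
    (c : ℕ) (hc : 1 ≤ c) (i : ℕ) (hi : 1 ≤ i) (v : Fin k → ℂ)
    (h1 : ((B - lam • 1) ^ i).mulVec v = 0)
    (h2 : ((B - lam • 1) ^ (i - 1)).mulVec v ≠ 0) :
    ((B ^ c - lam ^ c • 1) ^ i).mulVec v = 0 ∧
      ((B ^ c - lam ^ c • 1) ^ (i - 1)).mulVec v ≠ 0 := by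
  obtain ⟨j, rfl⟩ : ∃ j, i = j + 1 := ⟨i - 1, by omega⟩
  simp only [Nat.add_sub_cancel] at h2 ⊢
  set N := B - lam • (1 : Matrix (Fin k) (Fin k) ℂ) with hNdef
  have hNaeval : aeval B (X - C lam) = N := by
    simp [hNdef, Algebra.algebraMap_eq_smul_one]
  obtain ⟨q, hq⟩ : (X - C lam) ∣ (X ^ c - C (lam ^ c)) := by
    rw [dvd_iff_isRoot]; simp [IsRoot]
  set a : ℂ := (c : ℂ) * lam ^ (c - 1) with hadef
  have ha0 : a ≠ 0 := mul_ne_zero (Nat.cast_ne_zero.mpr (by omega)) (pow_ne_zero _ hlam)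
  have hqeval : q.eval lam = a := by
    have hd : derivative (X ^ c - C (lam ^ c)) = derivative ((X - C lam) * q) := by rw [hq]
    rw [derivative_sub, derivative_X_pow, derivative_C, sub_zero, derivative_mul,
      derivative_sub, derivative_X, derivative_C, sub_zero, one_mul] at hd
    have := congrArg (eval lam) hd
    simpa [hadef] using this.symm
  have hM : B ^ c - lam ^ c • 1 = N * aeval B q := by
    have := congrArg (aeval B) hq
    simpa [Algebra.algebraMap_eq_smul_one, hNaeval, _root_.smul_pow, one_pow] using this
  have hpow : ∀ m : ℕ, (B ^ c - lam ^ c • 1) ^ m = aeval B ((X - C lam) ^ m * q ^ m) := by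
    intro m
    rw [hM, ← hNaeval, ← map_mul, ← mul_pow, map_pow]
  have hNpow : ∀ m : ℕ, (N : Matrix (Fin k) (Fin k) ℂ) ^ m = aeval B ((X - C lam) ^ m) := by
    intro m; rw [← hNaeval, map_pow]
  have hzero : ((B ^ c - lam ^ c • 1) ^ (j + 1)).mulVec v = 0 := by
    rw [hpow, mul_comm ((X - C lam) ^ (j + 1)), map_mul, ← hNpow, ← Matrix.mulVec_mulVec,
      h1, Matrix.mulVec_zero]
  refine ⟨hzero, ?_⟩
  obtain ⟨t, ht⟩ : (X - C lam) ∣ (q ^ j - C (a ^ j)) := by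
    rw [dvd_iff_isRoot]; simp [IsRoot, hqeval]
  have hqj : q ^ j = (X - C lam) * t + C (a ^ j) := by rw [← ht]; ring
  have hpoly : (X - C lam) ^ j * q ^ j =
      t * (X - C lam) ^ (j + 1) + C (a ^ j) * (X - C lam) ^ j := by
    rw [hqj, pow_succ]; ring
  have hMj : (B ^ c - lam ^ c • 1) ^ j =
      aeval B t * N ^ (j + 1) + a ^ j • N ^ j := by
    rw [hpow, hpoly]
    simp [hNaeval, Algebra.algebraMap_eq_smul_one, smul_mul_assoc, _root_.smul_pow, one_pow,
      ← hNpow]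
  rw [hMj, Matrix.add_mulVec, Matrix.smul_mulVec, ← Matrix.mulVec_mulVec, h1,
    Matrix.mulVec_zero, zero_add]
  exact smul_ne_zero (pow_ne_zero _ ha0) h2
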